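/- Let R = 𝔬/𝔭^ℓ, 0 ≤ s ≤ r ≤ ℓ-1, and χ, χ' ∈ R̂ with v̂(χ) = v̂(χ') = r. Then Σ_{b ∈ R_s} χ(b)·conj(χ'(b)) equals: q^{ℓ-s-1}(q-1) if v̂(χχ'⁻¹) ≤ s-1; −q^{ℓ-s-1} if v̂(χχ'⁻¹) = s; and 0 if v̂(χχ'⁻¹) ≥ s+1. -/

import Mathlib

open scoped BigOperators
open ComplexConjugate

section aux
variable {R : Type*} [CommRing R] [Fintype R]

lemma sum_addChar_ideal_eq_card (I : Ideal R) (ψ : AddChar R ℂ)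
    (h : ∀ a ∈ I, ψ a = 1) :
    ∑ b ∈ (Set.toFinite (I : Set R)).toFinset, ψ b = (Nat.card I : ℂ) := by
  rw [Finset.sum_congr rfl (fun b hb => h b (by simpa using hb)), Finset.sum_const]
  have : (Set.toFinite (I : Set R)).toFinset.card = Nat.card I := by
    rw [← Set.ncard_eq_toFinset_card _ (Set.toFinite _), ← Nat.card_coe_set_eq]
    rfl
  simp [this]

lemma sum_addChar_ideal_eq_zero (I : Ideal R) (ψ : AddChar R ℂ)
    (h : ¬ ∀ a ∈ I, ψ a = 1) :
    ∑ b ∈ (Set.toFinite (I : Set R)).toFinset, ψ b = 0 := by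
  push_neg at h
  obtain ⟨a₀, ha₀, hne⟩ := h
  set T := (Set.toFinite (I : Set R)).toFinset with hT
  have key : ∑ b ∈ T, ψ b = ψ a₀ * ∑ b ∈ T, ψ b := by
    rw [Finset.mul_sum]
    refine Finset.sum_nbij' (fun b => b - a₀) (fun b => a₀ + b) ?_ ?_ ?_ ?_ ?_
    · intro b hb
      simp only [hT, Set.Finite.mem_toFinset, SetLike.mem_coe] at hb ⊢
      exact I.sub_mem hb ha₀
    · intro b hb
      simp only [hT, Set.Finite.mem_toFinset, SetLike.mem_coe] at hb ⊢
      exact I.add_mem ha₀ hb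
    · intro b _; ring
    · intro b _; ring
    · intro b _
      rw [← AddChar.map_add_eq_mul]
      ring_nf
  have h2 : (ψ a₀ - 1) * ∑ b ∈ T, ψ b = 0 := by linear_combination -key
  rcases mul_eq_zero.mp h2 with h3 | h3
  · exact absurd (by linear_combination h3) hne
  · exact h3

end aux

/-- The image in `R = 𝔬/𝔭^ℓ` of the ideal `𝔭^r`. -/
def idealImage (O : Type) [CommRing O] (π : O) (ℓ r : ℕ) :
    Ideal (O ⧸ (Ideal.span {π} ^ ℓ)) :=
  Ideal.map (Ideal.Quotient.mk (Ideal.span {π} ^ ℓ)) (Ideal.span {π} ^ r)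

/-- The set of characters `χ` of `R = 𝔬/𝔭^ℓ` with dual valuation `v̂(χ) = r`. -/
def dualLevel (O : Type) [CommRing O] (π : O) (ℓ r : ℕ) :
    Set (AddChar (O ⧸ (Ideal.span {π} ^ ℓ)) ℂ) :=
  {χ | (∀ a ∈ idealImage O π ℓ (r + 1), χ a = 1) ∧ ∃ a ∈ idealImage O π ℓ r, χ a ≠ 1}

/-- for `0 ≤ s ≤ r ≤ ℓ-1` and `χ, χ'` with `v̂(χ)=v̂(χ')=r`, the sum
`Σ_{b ∈ R_s} χ(b) conj(χ'(b))` equals `q^{ℓ-s-1}(q-1)` if `v̂(χχ'⁻¹) ≤ s-1`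
(i.e. `χ = χ'` on the image of `𝔭^s`), `-q^{ℓ-s-1}` if `v̂(χχ'⁻¹) = s`, and `0`
if `v̂(χχ'⁻¹) ≥ s+1`. -/
theorem stmt_9 (O : Type) [CommRing O] [IsDomain O] [IsDiscreteValuationRing O]
    (π : O) (hπ : Irreducible π) (q ℓ : ℕ)
    [Finite (O ⧸ Ideal.span {π})] (hq : Nat.card (O ⧸ Ideal.span {π}) = q)
    (s r : ℕ) (hs : s ≤ r) (hr : r ≤ ℓ - 1) (hℓ : 1 ≤ ℓ)
    (χ χ' : AddChar (O ⧸ (Ideal.span {π} ^ ℓ)) ℂ)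
    (hχ : χ ∈ dualLevel O π ℓ r) (hχ' : χ' ∈ dualLevel O π ℓ r) :
    ((∀ a ∈ idealImage O π ℓ s, χ a = χ' a) →
      ∑ᶠ b ∈ {b | b ∈ idealImage O π ℓ s ∧ b ∉ idealImage O π ℓ (s + 1)},
          χ b * conj (χ' b) = (q : ℂ) ^ (ℓ - s - 1) * ((q : ℂ) - 1)) ∧
    (((∀ a ∈ idealImage O π ℓ (s + 1), χ a = χ' a) ∧
        ¬(∀ a ∈ idealImage O π ℓ s, χ a = χ' a)) →
      ∑ᶠ b ∈ {b | b ∈ idealImage O π ℓ s ∧ b ∉ idealImage O π ℓ (s + 1)},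
          χ b * conj (χ' b) = -(q : ℂ) ^ (ℓ - s - 1)) ∧
    ((¬(∀ a ∈ idealImage O π ℓ (s + 1), χ a = χ' a)) →
      ∑ᶠ b ∈ {b | b ∈ idealImage O π ℓ s ∧ b ∉ idealImage O π ℓ (s + 1)},
          χ b * conj (χ' b) = 0) := by
  classical
  have hq0 : 0 < q := hq ▸ Nat.card_pos
  have hπ0 : π ≠ 0 := hπ.ne_zero
  have hP0 : (Ideal.span {π} : Ideal O) ≠ ⊥ := by
    exact fun h => hπ0 (Ideal.span_singleton_eq_bot.mp h)
  haveI hPP : (Ideal.span {π} : Ideal O).IsPrime :=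
    (Ideal.span_singleton_prime hπ0).mpr
      (UniqueFactorizationMonoid.irreducible_iff_prime.mp hπ)
  have cardN : ∀ n : ℕ, Nat.card (O ⧸ Ideal.span {π} ^ n) = q ^ n := by
    intro n
    have h1 := cardQuot_pow_of_prime (P := (Ideal.span {π} : Ideal O)) hP0 (i := n)
    rw [Submodule.cardQuot_apply, Submodule.cardQuot_apply] at h1
    rw [h1, hq]
  haveI hR : Finite (O ⧸ Ideal.span {π} ^ ℓ) :=
    (Nat.card_pos_iff.mp (by rw [cardN ℓ]; positivity)).2
  haveI : Fintype (O ⧸ Ideal.span {π} ^ ℓ) := Fintype.ofFinite _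
  have hsl : s + 1 ≤ ℓ := by omega
  -- cardinality of the ideal images
  have cardI : ∀ t : ℕ, t ≤ ℓ → Nat.card (idealImage O π ℓ t) = q ^ (ℓ - t) := by
    intro t ht
    have hle : (Ideal.span {π} : Ideal O) ^ ℓ ≤ Ideal.span {π} ^ t :=
      Ideal.pow_le_pow_right ht
    have e : ((O ⧸ Ideal.span {π} ^ ℓ) ⧸ idealImage O π ℓ t) ≃+* O ⧸ Ideal.span {π} ^ t :=
      DoubleQuot.quotQuotEquivQuotOfLE hle
    have h1 := AddSubgroup.card_eq_card_quotient_mul_card_addSubgroup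
      (Submodule.toAddSubgroup (idealImage O π ℓ t))
    have h2 : Nat.card ((O ⧸ Ideal.span {π} ^ ℓ) ⧸
        (Submodule.toAddSubgroup (idealImage O π ℓ t))) =
        Nat.card ((O ⧸ Ideal.span {π} ^ ℓ) ⧸ idealImage O π ℓ t) := rfl
    have h3 : Nat.card (Submodule.toAddSubgroup (idealImage O π ℓ t)) =
        Nat.card (idealImage O π ℓ t) := rfl
    rw [h2, h3, Nat.card_congr e.toEquiv, cardN ℓ, cardN t] at h1
    have h4 : q ^ t * Nat.card (idealImage O π ℓ t) = q ^ t * q ^ (ℓ - t) := by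
      rw [← h1, ← pow_add]
      congr 1
      omega
    exact Nat.eq_of_mul_eq_mul_left (pow_pos hq0 t) h4
  -- setup ψ
  set ψ : AddChar (O ⧸ Ideal.span {π} ^ ℓ) ℂ := χ * χ'⁻¹ with hψdef
  have hψ : ∀ b, ψ b = χ b * conj (χ' b) := by
    intro b
    rw [hψdef, AddChar.mul_apply, AddChar.inv_apply', AddChar.inv_apply_eq_conj]
  have hone : ∀ a, (ψ a = 1 ↔ χ a = χ' a) := by
    intro a
    have hn : χ' a ≠ 0 := by
      intro h0
      have := χ'.norm_apply a
      rw [h0] at this; simp at this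
    rw [hψdef, AddChar.mul_apply, AddChar.inv_apply', mul_inv_eq_one₀ hn]
  -- the finsum as a difference of finset sums
  set T₁ := (Set.toFinite ((idealImage O π ℓ s : Set (O ⧸ Ideal.span {π} ^ ℓ)))).toFinset with hT₁
  set T₂ := (Set.toFinite ((idealImage O π ℓ (s+1) : Set (O ⧸ Ideal.span {π} ^ ℓ)))).toFinset with hT₂
  have hsub : T₂ ⊆ T₁ := by
    intro b hb
    simp only [hT₁, hT₂, Set.Finite.mem_toFinset, SetLike.mem_coe] at hb ⊢
    exact Ideal.map_mono (Ideal.pow_le_pow_right (Nat.le_succ s)) hb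
  have key : ∑ᶠ b ∈ {b | b ∈ idealImage O π ℓ s ∧ b ∉ idealImage O π ℓ (s + 1)},
      χ b * conj (χ' b) = (∑ b ∈ T₁, ψ b) - (∑ b ∈ T₂, ψ b) := by
    have hset : {b | b ∈ idealImage O π ℓ s ∧ b ∉ idealImage O π ℓ (s + 1)} =
        ((T₁ \ T₂ : Finset (O ⧸ Ideal.span {π} ^ ℓ)) : Set (O ⧸ Ideal.span {π} ^ ℓ)) := by
      ext b
      simp only [hT₁, hT₂, Finset.coe_sdiff, Set.mem_diff, Set.Finite.coe_toFinset,
        SetLike.mem_coe, Set.mem_setOf_eq]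
    rw [hset, finsum_mem_coe_finset, Finset.sum_sdiff_eq_sub hsub]
    congr 1 <;> exact Finset.sum_congr rfl (fun b _ => (hψ b).symm)
  have c₁ : (Nat.card (idealImage O π ℓ s) : ℂ) = (q : ℂ) ^ (ℓ - s) := by
    rw [cardI s (by omega)]; push_cast; ring
  have c₂ : (Nat.card (idealImage O π ℓ (s+1)) : ℂ) = (q : ℂ) ^ (ℓ - s - 1) := by
    rw [cardI (s+1) hsl]
    norm_cast
  refine ⟨?_, ?_, ?_⟩
  · intro h
    have h1 : ∀ a ∈ idealImage O π ℓ s, ψ a = 1 := fun a ha => (hone a).mpr (h a ha)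
    have h2 : ∀ a ∈ idealImage O π ℓ (s+1), ψ a = 1 := fun a ha =>
      h1 a (Ideal.map_mono (Ideal.pow_le_pow_right (Nat.le_succ s)) ha)
    have hpow : (q : ℂ) ^ (ℓ - s) = (q : ℂ) ^ (ℓ - s - 1) * q := by
      rw [← pow_succ]
      congr 1
      omega
    rw [key, sum_addChar_ideal_eq_card _ _ h1, sum_addChar_ideal_eq_card _ _ h2, c₁, c₂, hpow]
    ring
  · rintro ⟨h2, h1⟩
    have h1' : ¬ ∀ a ∈ idealImage O π ℓ s, ψ a = 1 := by
      intro hc; exact h1 (fun a ha => (hone a).mp (hc a ha))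
    have h2' : ∀ a ∈ idealImage O π ℓ (s+1), ψ a = 1 := fun a ha => (hone a).mpr (h2 a ha)
    rw [key, sum_addChar_ideal_eq_zero _ _ h1', sum_addChar_ideal_eq_card _ _ h2', c₂]
    ring
  · intro h2
    have h2' : ¬ ∀ a ∈ idealImage O π ℓ (s+1), ψ a = 1 := by
      intro hc; exact h2 (fun a ha => (hone a).mp (hc a ha))
    have h1' : ¬ ∀ a ∈ idealImage O π ℓ s, ψ a = 1 := by
      intro hc
      exact h2' (fun a ha => hc a (Ideal.map_mono (Ideal.pow_le_pow_right (Nat.le_succ s)) ha))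
    rw [key, sum_addChar_ideal_eq_zero _ _ h1', sum_addChar_ideal_eq_zero _ _ h2']
    ring
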